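/- Let G be a connected multigraph that is 2-edge-connected (one-particle irreducible) with two distinguished vertices v₁ and v₂, in which every vertex has even degree after counting two external legs at v₁, v₂ (so internally every vertex has even incidence). Let T be a spanning tree of G and let θ be the unique path in T from v₁ to v₂. Then for every edge ℓ ∈ θ there exist two distinct edges ℓ₁, ℓ₂ of G not in T such that for i ∈ {1,2}, the graph obtained from T by removing ℓ and adding ℓ_i is again a spanning tree of G; equivalently, ℓ lies on the fundamental cycles of both ℓ₁ and ℓ₂ with respect to T. -/

import Mathlib

/-- Adjacency via an edge in the subset `S` of edges of a multigraph given by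
its endpoint map `ends`. -/
def EdgeRel {V E : Type*} (ends : E → V × V) (S : Set E) (a b : V) : Prop :=
  ∃ e ∈ S, ends e = (a, b) ∨ ends e = (b, a)

/-- The edge set `S` spans and connects the whole vertex set. -/
def ConnOn {V E : Type*} (ends : E → V × V) (S : Set E) : Prop :=
  ∀ a b : V, Relation.ReflTransGen (EdgeRel ends S) a b

/-- `T` is a spanning tree: it connects all vertices and is edge-minimal. -/
def IsSpanningTree {V E : Type*} (ends : E → V × V) (T : Set E) : Prop :=
  ConnOn ends T ∧ ∀ e ∈ T, ¬ ConnOn ends (T \ {e})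

/-- Degree of `v` in the multigraph (each loop counted twice). -/
def mdeg {V E : Type*} [Fintype E] [DecidableEq V] (ends : E → V × V) (v : V) : ℕ :=
  ∑ e : E, ((if (ends e).1 = v then 1 else 0) + (if (ends e).2 = v then 1 else 0))

section Aux

variable {V E : Type*} {ends : E → V × V}

private lemma er_symm {S : Set E} {a b : V} (h : EdgeRel ends S a b) : EdgeRel ends S b a := by
  obtain ⟨e, he, h⟩ := h
  exact ⟨e, he, h.symm⟩

private lemma rt_symm {S : Set E} {a b : V}
    (h : Relation.ReflTransGen (EdgeRel ends S) a b) :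
    Relation.ReflTransGen (EdgeRel ends S) b a :=
  haveI : Std.Symm (EdgeRel ends S) := ⟨fun _ _ h => er_symm h⟩
  Std.Symm.symm _ _ h

private lemma rt_mono {S S' : Set E} (hss : S ⊆ S') {a b : V}
    (h : Relation.ReflTransGen (EdgeRel ends S) a b) :
    Relation.ReflTransGen (EdgeRel ends S') a b :=
  Relation.ReflTransGen.mono (p := EdgeRel ends S') (fun _ _ ⟨e, he, h⟩ => ⟨e, hss he, h⟩) a b h

/-- If `insert f S` connects everything, then every vertex is reachable in `S`
from one of the endpoints of `f`. -/
private lemma cover {S : Set E} {f : E} (hc : ConnOn ends (insert f S)) (v : V) :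
    Relation.ReflTransGen (EdgeRel ends S) (ends f).1 v ∨
    Relation.ReflTransGen (EdgeRel ends S) (ends f).2 v := by
  have h := hc (ends f).1 v
  induction h with
  | refl => exact Or.inl Relation.ReflTransGen.refl
  | @tail b c hab he ih =>
    obtain ⟨e, heS, hor⟩ := he
    rcases Set.mem_insert_iff.mp heS with rfl | heS
    · rcases hor with h1 | h1
      · exact Or.inr (by rw [h1])
      · exact Or.inl (by rw [h1])
    · rcases ih with h2 | h2
      · exact Or.inl (h2.tail ⟨e, heS, hor⟩)
      · exact Or.inr (h2.tail ⟨e, heS, hor⟩)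

/-- If the endpoints of `e` remain connected in `S \ {e}`, any `S`-path lifts. -/
private lemma lift {S : Set E} {e : E}
    (hcd : Relation.ReflTransGen (EdgeRel ends (S \ {e})) (ends e).1 (ends e).2)
    {x y : V} (h : Relation.ReflTransGen (EdgeRel ends S) x y) :
    Relation.ReflTransGen (EdgeRel ends (S \ {e})) x y := by
  induction h with
  | refl => exact Relation.ReflTransGen.refl
  | @tail b c hab he ih =>
    obtain ⟨e', he', hor⟩ := he
    by_cases hee : e' = e
    · subst hee
      rcases hor with h1 | h1
      · exact ih.trans (by rw [h1] at hcd; exact hcd)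
      · exact ih.trans (rt_symm (by rw [h1] at hcd; exact hcd))
    · exact ih.tail ⟨e', ⟨he', hee⟩, hor⟩

private lemma bridge_ends {S : Set E} (hS : ConnOn ends S) {e : E} (heS : e ∈ S)
    (hne : ¬ ConnOn ends (S \ {e})) :
    ¬ Relation.ReflTransGen (EdgeRel ends (S \ {e})) (ends e).1 (ends e).2 :=
  fun hcd => hne (fun a b => lift hcd (hS a b))

/-- The tree swap lemma: replacing a tree edge `l` by any edge `f` whose
endpoints are disconnected in `T \ {l}` yields again a spanning tree. -/
private lemma swap_tree {T : Set E} (hT : IsSpanningTree ends T) {l : E} (hl : l ∈ T) {f : E}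
    (hcross : ¬ Relation.ReflTransGen (EdgeRel ends (T \ {l})) (ends f).1 (ends f).2) :
    IsSpanningTree ends (insert f (T \ {l})) := by
  have hTeq : insert l (T \ {l}) = T := by
    rw [Set.insert_diff_singleton, Set.insert_eq_self.mpr hl]
  have hcovl : ∀ v, Relation.ReflTransGen (EdgeRel ends (T \ {l})) (ends l).1 v ∨
      Relation.ReflTransGen (EdgeRel ends (T \ {l})) (ends l).2 v := by
    intro v
    exact cover (by rw [hTeq]; exact hT.1) v
  have hab : ¬ Relation.ReflTransGen (EdgeRel ends (T \ {l})) (ends l).1 (ends l).2 :=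
    bridge_ends hT.1 hl (hT.2 l hl)
  have hfT : f ∉ T \ {l} := fun hf =>
    hcross (Relation.ReflTransGen.single ⟨f, hf, Or.inl rfl⟩)
  have hsubS : T \ {l} ⊆ insert f (T \ {l}) := Set.subset_insert _ _
  have hfstep : Relation.ReflTransGen (EdgeRel ends (insert f (T \ {l})))
      (ends f).1 (ends f).2 :=
    Relation.ReflTransGen.single ⟨f, Set.mem_insert _ _, Or.inl rfl⟩
  -- the two endpoints of l are joined in the new set
  have hkey : Relation.ReflTransGen (EdgeRel ends (insert f (T \ {l})))
      (ends l).1 (ends l).2 := by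
    rcases hcovl (ends f).1 with hc | hc <;> rcases hcovl (ends f).2 with hd | hd
    · exact absurd ((rt_symm hc).trans hd) hcross
    · exact (rt_mono hsubS hc).trans (hfstep.trans (rt_mono hsubS (rt_symm hd)))
    · exact (rt_mono hsubS hd).trans ((rt_symm hfstep).trans (rt_mono hsubS (rt_symm hc)))
    · exact absurd ((rt_symm hc).trans hd) hcross
  have hSa : ∀ v, Relation.ReflTransGen (EdgeRel ends (insert f (T \ {l}))) (ends l).1 v :=
    fun v => (hcovl v).elim (fun h => rt_mono hsubS h) (fun h => hkey.trans (rt_mono hsubS h))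
  refine ⟨fun x y => (rt_symm (hSa x)).trans (hSa y), ?_⟩
  intro g hg
  rcases Set.mem_insert_iff.mp hg with rfl | hgTl
  · -- removing the new edge again
    intro hcon
    rw [Set.insert_diff_self_of_notMem hfT] at hcon
    exact hcross (hcon _ _)
  · -- removing an old tree edge
    have hgf : g ≠ f := fun h => hfT (h ▸ hgTl)
    intro hcon
    have heq : (insert f (T \ {l})) \ {g} = insert f ((T \ {l}) \ {g}) :=
      Set.insert_diff_of_notMem _ (by simpa using hgf.symm)
    rw [heq] at hcon
    have hcov2 := fun v => cover (S := (T \ {l}) \ {g}) hcon v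
    have hsub : (T \ {l}) \ {g} ⊆ T \ {g} := fun x hx => ⟨hx.1.1, hx.2⟩
    have hsub' : (T \ {l}) \ {g} ⊆ T \ {l} := fun x hx => hx.1
    have hgT : g ∈ T := hgTl.1
    have hlg : l ∈ T \ {g} := ⟨hl, fun h => hgTl.2 (by simp_all)⟩
    have hstep : Relation.ReflTransGen (EdgeRel ends (T \ {g})) (ends l).1 (ends l).2 :=
      Relation.ReflTransGen.single ⟨l, hlg, Or.inl rfl⟩
    have hcd' : Relation.ReflTransGen (EdgeRel ends (T \ {g})) (ends f).1 (ends f).2 := by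
      rcases hcov2 (ends l).1 with hca | hda <;> rcases hcov2 (ends l).2 with hcb | hdb
      · exact absurd ((rt_symm (rt_mono hsub' hca)).trans (rt_mono hsub' hcb)) hab
      · exact (rt_mono hsub hca).trans (hstep.trans (rt_mono hsub (rt_symm hdb)))
      · exact (rt_mono hsub hcb).trans ((rt_symm hstep).trans (rt_mono hsub (rt_symm hda)))
      · exact absurd ((rt_symm (rt_mono hsub' hda)).trans (rt_mono hsub' hdb)) hab
    have hGc : ∀ v, Relation.ReflTransGen (EdgeRel ends (T \ {g})) (ends f).1 v :=
      fun v => (hcov2 v).elim (fun h => rt_mono hsub h) (fun h => hcd'.trans (rt_mono hsub h))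
    exact hT.2 g hgT (fun x y => (rt_symm (hGc x)).trans (hGc y))

/-- Along a path from inside `A` to outside `A` some edge crosses the boundary. -/
private lemma exists_cross {A : Set V} {S : Set E} {x y : V}
    (h : Relation.ReflTransGen (EdgeRel ends S) x y) (hx : x ∈ A) (hy : y ∉ A) :
    ∃ e ∈ S, ¬(((ends e).1 ∈ A) ↔ ((ends e).2 ∈ A)) := by
  revert hy
  induction h with
  | refl => exact fun hy => absurd hx hy
  | @tail b c hab he ih =>
    intro hc
    by_cases hbA : b ∈ A
    · obtain ⟨e, heS, hor⟩ := he
      refine ⟨e, heS, ?_⟩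
      rcases hor with h1 | h1
      · rw [h1]; exact fun hiff => hc (hiff.mp hbA)
      · rw [h1]; exact fun hiff => hc (hiff.mpr hbA)
    · exact ih hbA

end Aux

/-- Let `G` be a connected, 2-edge-connected (1PI) multigraph
with two external vertices `v₁ ≠ v₂` carrying one external leg each (so their
internal degree is odd and all other degrees are even).  Let `T` be a spanning
tree and `ℓ` an edge on the unique path in `T` from `v₁` to `v₂` (i.e. `ℓ ∈ T`
and removing `ℓ` from `T` separates `v₁` from `v₂`).  Then there are two
distinct non-tree edges `ℓ₁ ≠ ℓ₂` such that replacing `ℓ` in `T` by either one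
again yields a spanning tree; equivalently `ℓ` lies on two overlapping loops. -/
theorem two_overlapping_loops
    {V E : Type*} [Fintype V] [Fintype E] [DecidableEq V] [DecidableEq E]
    (ends : E → V × V) (v₁ v₂ : V) (hv : v₁ ≠ v₂)
    (hconn : ConnOn ends Set.univ)
    (h1PI : ∀ e : E, ConnOn ends (Set.univ \ {e}))
    (heven : ∀ v : V, v ≠ v₁ → v ≠ v₂ → Even (mdeg ends v))
    (hodd1 : Odd (mdeg ends v₁)) (hodd2 : Odd (mdeg ends v₂))
    (T : Set E) (hT : IsSpanningTree ends T)
    (ℓ : E) (hℓT : ℓ ∈ T)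
    (hpath : ¬ Relation.ReflTransGen (EdgeRel ends (T \ {ℓ})) v₁ v₂) :
    ∃ ℓ₁ ℓ₂ : E, ℓ₁ ∉ T ∧ ℓ₂ ∉ T ∧ ℓ₁ ≠ ℓ₂ ∧
      IsSpanningTree ends (insert ℓ₁ (T \ {ℓ})) ∧
      IsSpanningTree ends (insert ℓ₂ (T \ {ℓ})) := by
  classical
  set A : Set V := {v | Relation.ReflTransGen (EdgeRel ends (T \ {ℓ})) v₁ v} with hAdef
  have hv1A : v₁ ∈ A := Relation.ReflTransGen.refl
  have hv2A : v₂ ∉ A := hpath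
  -- A is closed under edges of T \ {ℓ}
  have hclosed : ∀ e ∈ T \ {ℓ}, (((ends e).1 ∈ A) ↔ ((ends e).2 ∈ A)) := by
    intro e he
    constructor
    · intro h1
      exact Relation.ReflTransGen.tail h1 ⟨e, he, Or.inl rfl⟩
    · intro h2
      exact Relation.ReflTransGen.tail h2 ⟨e, he, Or.inr rfl⟩
  have hTeq : insert ℓ (T \ {ℓ}) = T := by
    rw [Set.insert_diff_singleton, Set.insert_eq_self.mpr hℓT]
  have hcovl : ∀ v, Relation.ReflTransGen (EdgeRel ends (T \ {ℓ})) (ends ℓ).1 v ∨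
      Relation.ReflTransGen (EdgeRel ends (T \ {ℓ})) (ends ℓ).2 v := by
    intro v
    exact cover (by rw [hTeq]; exact hT.1) v
  have hab : ¬ Relation.ReflTransGen (EdgeRel ends (T \ {ℓ})) (ends ℓ).1 (ends ℓ).2 :=
    bridge_ends hT.1 hℓT (hT.2 ℓ hℓT)
  -- ℓ crosses the cut
  have hCrℓ : ¬(((ends ℓ).1 ∈ A) ↔ ((ends ℓ).2 ∈ A)) := by
    rcases hcovl v₁ with h1 | h1
    · have ha : (ends ℓ).1 ∈ A := rt_symm h1
      exact fun hiff => hab ((rt_symm ha).trans (hiff.mp ha))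
    · have hb : (ends ℓ).2 ∈ A := rt_symm h1
      exact fun hiff => hab (rt_symm ((rt_symm hb).trans (hiff.mpr hb)))
  -- a second crossing edge exists by 2-edge-connectivity
  obtain ⟨e₀, he₀, hCre₀⟩ := exists_cross (A := A) (h1PI ℓ v₁ v₂) hv1A hv2A
  have he₀ℓ : e₀ ≠ ℓ := fun h => he₀.2 (by simp [h])
  -- the set of crossing edges
  set F : Finset E :=
    Finset.univ.filter (fun e => ¬(((ends e).1 ∈ A) ↔ ((ends e).2 ∈ A))) with hFdef
  have hℓF : ℓ ∈ F := Finset.mem_filter.mpr ⟨Finset.mem_univ _, hCrℓ⟩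
  have he₀F : e₀ ∈ F := Finset.mem_filter.mpr ⟨Finset.mem_univ _, hCre₀⟩
  -- parity: the number of crossing edges is odd
  have hoddF : Odd F.card := by
    set s : Finset V := Finset.univ.filter (· ∈ A) with hsdef
    have hsum : ∑ v ∈ s, mdeg ends v =
        ∑ e : E, ((if (ends e).1 ∈ A then 1 else 0) + (if (ends e).2 ∈ A then 1 else 0)) := by
      unfold mdeg
      rw [Finset.sum_comm]
      refine Finset.sum_congr rfl fun e _ => ?_
      rw [Finset.sum_add_distrib, Finset.sum_ite_eq s (ends e).1 (fun _ => 1),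
        Finset.sum_ite_eq s (ends e).2 (fun _ => 1)]
      simp [hsdef]
    have hmod : (∑ v ∈ s, mdeg ends v) % 2 = F.card % 2 := by
      have hcard : F.card =
          ∑ e : E, (if ¬(((ends e).1 ∈ A) ↔ ((ends e).2 ∈ A)) then 1 else 0) := by
        rw [hFdef, Finset.card_filter]
      rw [hsum, Finset.sum_nat_mod, hcard]
      congr 1
      refine Finset.sum_congr rfl fun e _ => ?_
      by_cases h1 : (ends e).1 ∈ A <;> by_cases h2 : (ends e).2 ∈ A <;> simp [h1, h2]
    have hodds : (∑ v ∈ s, mdeg ends v) % 2 = 1 := by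
      have hv1s : v₁ ∈ s := Finset.mem_filter.mpr ⟨Finset.mem_univ _, hv1A⟩
      rw [← Finset.add_sum_erase s (mdeg ends) hv1s]
      have heven' : (∑ v ∈ s.erase v₁, mdeg ends v) % 2 = 0 := by
        rw [Finset.sum_nat_mod]
        have : ∑ v ∈ s.erase v₁, mdeg ends v % 2 = 0 := by
          refine Finset.sum_eq_zero fun v hvmem => ?_
          have hne1 : v ≠ v₁ := (Finset.mem_erase.mp hvmem).1
          have hvA : v ∈ A :=
            (Finset.mem_filter.mp (Finset.mem_erase.mp hvmem).2).2
          have hne2 : v ≠ v₂ := fun h => hv2A (h ▸ hvA)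
          exact Nat.even_iff.mp (heven v hne1 hne2)
        rw [this]
      rw [Nat.add_mod, Nat.odd_iff.mp hodd1, heven']
    rw [hodds] at hmod
    exact Nat.odd_iff.mpr hmod.symm
  have h2 : 1 < F.card := Finset.one_lt_card.mpr ⟨ℓ, hℓF, e₀, he₀F, Ne.symm he₀ℓ⟩
  have h3 : 3 ≤ F.card := by
    obtain ⟨k, hk⟩ := hoddF
    omega
  have h2' : 1 < (F.erase ℓ).card := by
    rw [Finset.card_erase_of_mem hℓF]
    omega
  obtain ⟨ℓ₁, hm1, ℓ₂, hm2, hne⟩ := Finset.one_lt_card.mp h2'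
  have key : ∀ e ∈ F.erase ℓ, e ∉ T ∧ IsSpanningTree ends (insert e (T \ {ℓ})) := by
    intro e he
    have heℓ : e ≠ ℓ := (Finset.mem_erase.mp he).1
    have hCre : ¬(((ends e).1 ∈ A) ↔ ((ends e).2 ∈ A)) :=
      (Finset.mem_filter.mp (Finset.mem_erase.mp he).2).2
    have heT : e ∉ T := fun h => hCre (hclosed e ⟨h, by simpa using heℓ⟩)
    refine ⟨heT, swap_tree hT hℓT ?_⟩
    intro hcd
    apply hCre
    constructor
    · intro h1
      exact h1.trans hcd
    · intro h2
      exact h2.trans (rt_symm hcd)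
  exact ⟨ℓ₁, ℓ₂, (key ℓ₁ hm1).1, (key ℓ₂ hm2).1, hne,
    (key ℓ₁ hm1).2, (key ℓ₂ hm2).2⟩
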